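/- Let X be a real normed space admitting a differentiable blid map (a bounded, Fréchet differentiable H : X → X equal to the identity near 0). Then for every normed space Y, every function f : X → Y that is Fréchet differentiable on an open neighborhood U of 0 admits a function F : X → Y that is Fréchet differentiable on all of X and agrees with f on some neighborhood of 0. -/

import Mathlib

theorem stmt_3 {X : Type*} [NormedAddCommGroup X] [NormedSpace ℝ X]
    (H : X → X) (hH : Differentiable ℝ H)
    (hid : ∀ᶠ x in nhds (0 : X), H x = x)
    (hbd : ∃ N : ℝ, ∀ x, ‖H x‖ ≤ N)
    {Y : Type*} [NormedAddCommGroup Y] [NormedSpace ℝ Y]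
    (f : X → Y) (U : Set X) (hU : IsOpen U) (hU0 : (0 : X) ∈ U)
    (hf : ∀ x ∈ U, DifferentiableAt ℝ f x) :
    ∃ F : X → Y, Differentiable ℝ F ∧ ∀ᶠ x in nhds (0 : X), F x = f x := by
  obtain ⟨δ, hδ, hball⟩ := Metric.isOpen_iff.mp hU 0 hU0
  obtain ⟨ε, hε, hHid⟩ := Metric.eventually_nhds_iff.mp hid
  obtain ⟨N, hN⟩ := hbd
  set M : ℝ := max N 0 + 1 with hM
  have hMpos : 0 < M := by positivity
  set r : ℝ := δ / (2 * M) with hr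
  have hrpos : 0 < r := by positivity
  have hNM : ∀ x, ‖H x‖ < M := fun x =>
    lt_of_le_of_lt ((hN x).trans (le_max_left N 0)) (by linarith)
  set G : X → X := fun x => r • H (r⁻¹ • x) with hG
  have hGU : ∀ x, G x ∈ U := by
    intro x
    apply hball
    simp only [Metric.mem_ball, dist_zero_right, hG, norm_smul, Real.norm_eq_abs,
      abs_of_pos hrpos]
    calc r * ‖H (r⁻¹ • x)‖ < r * M := by
            exact mul_lt_mul_of_pos_left (hNM _) hrpos
      _ = δ / 2 := by field_simp [hr]; rw [hr]; field_simp
      _ < δ := by linarith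
  have hGdiff : Differentiable ℝ G := by
    apply Differentiable.const_smul
    exact hH.comp (differentiable_id.const_smul r⁻¹)
  refine ⟨f ∘ G, fun x => (hf (G x) (hGU x)).comp x (hGdiff x), ?_⟩
  rw [Metric.eventually_nhds_iff]
  refine ⟨r * ε, by positivity, fun y hy => ?_⟩
  have hy' : dist (r⁻¹ • y) 0 < ε := by
    rw [dist_zero_right, norm_smul, Real.norm_eq_abs, abs_of_pos (inv_pos.mpr hrpos)]
    rw [dist_zero_right] at hy
    calc r⁻¹ * ‖y‖ < r⁻¹ * (r * ε) := by
          exact mul_lt_mul_of_pos_left hy (inv_pos.mpr hrpos)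
      _ = ε := by field_simp
  have := hHid hy'
  simp only [Function.comp_apply, hG, this, smul_smul, mul_inv_cancel₀ hrpos.ne', one_smul]
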